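/- Let m < M be real numbers and let φ : ℝ → ℝ be three times continuously differentiable on an open interval containing [m,M] with φ''' ≥ 0 there (φ is 3-convex). Then for every x ∈ (m,M), writing Δ = (φ(M) − φ(m))/(M − m): (x − m)·[Δ − (φ'(x) + φ'(m))/2] ≤ (M − x)/(M − m)·φ(m) + (x − m)/(M − m)·φ(M) − φ(x) ≤ (M − x)·[(φ'(x) + φ'(M))/2 − Δ]. -/

import Mathlib

open Set

private lemma trapezoid_aux (a b : ℝ) (φ : ℝ → ℝ)
    (hφ : ContDiffOn ℝ 3 φ (Set.Ioo a b))
    (hφ3 : ∀ t ∈ Set.Ioo a b, 0 ≤ iteratedDeriv 3 φ t)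
    (u v : ℝ) (hu : u ∈ Set.Ioo a b) (hv : v ∈ Set.Ioo a b) (huv : u ≤ v) :
    φ v - φ u ≤ (v - u) * (deriv φ u + deriv φ v) / 2 := by
  have hO : IsOpen (Set.Ioo a b) := isOpen_Ioo
  have hd1 : DifferentiableOn ℝ φ (Set.Ioo a b) := hφ.differentiableOn (by norm_num)
  have hc2 : ContDiffOn ℝ 2 (deriv φ) (Set.Ioo a b) := hφ.deriv_of_isOpen hO (by norm_num)
  have hc1 : ContDiffOn ℝ 1 (deriv (deriv φ)) (Set.Ioo a b) :=
    hc2.deriv_of_isOpen hO (by norm_num)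
  have hd2 : DifferentiableOn ℝ (deriv φ) (Set.Ioo a b) := hc2.differentiableOn (by norm_num)
  have hd3 : DifferentiableOn ℝ (deriv (deriv φ)) (Set.Ioo a b) :=
    hc1.differentiableOn (by norm_num)
  have hder : ∀ s ∈ Set.Ioo a b, HasDerivAt φ (deriv φ s) s := fun s hs =>
    (hd1.differentiableAt (hO.mem_nhds hs)).hasDerivAt
  have hder2 : ∀ s ∈ Set.Ioo a b, HasDerivAt (deriv φ) (deriv (deriv φ) s) s := fun s hs =>
    (hd2.differentiableAt (hO.mem_nhds hs)).hasDerivAt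
  -- iteratedDeriv 3 φ = deriv (deriv (deriv φ))
  have hiter : ∀ t, iteratedDeriv 3 φ t = deriv (deriv (deriv φ)) t := by
    intro t
    rw [show (3 : ℕ) = 2 + 1 from rfl, iteratedDeriv_succ,
      show (2 : ℕ) = 1 + 1 from rfl, iteratedDeriv_succ, iteratedDeriv_one]
  -- φ'' is monotone on Ioo a b
  have hmono : MonotoneOn (deriv (deriv φ)) (Set.Ioo a b) := by
    apply monotoneOn_of_deriv_nonneg (convex_Ioo a b) hd3.continuousOn
    · rw [interior_Ioo]; exact hd3
    · intro t ht
      rw [interior_Ioo] at ht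
      have := hφ3 t ht
      rwa [hiter t] at this
  rcases eq_or_lt_of_le huv with rfl | huv
  · simp
  -- the auxiliary function
  set g : ℝ → ℝ := fun s => φ s - φ u - (s - u) * (deriv φ u + deriv φ s) / 2 with hg
  have hsub : Set.Icc u v ⊆ Set.Ioo a b := fun s hs => ⟨lt_of_lt_of_le hu.1 hs.1,
    lt_of_le_of_lt hs.2 hv.2⟩
  have hdg : ∀ s ∈ Set.Ioo a b, HasDerivAt g (deriv φ s -
      ((deriv φ u + deriv φ s) + (s - u) * deriv (deriv φ) s) / 2) s := by
    intro s hsab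
    have hp : HasDerivAt (fun t => (t - u) * (deriv φ u + deriv φ t) / 2)
        (((deriv φ u + deriv φ s) + (s - u) * deriv (deriv φ) s) / 2) s := by
      have h := (((hasDerivAt_id s).sub_const u).mul
        ((hasDerivAt_const s (deriv φ u)).add (hder2 s hsab))).div_const 2
      simpa using h
    exact ((hder s hsab).sub_const (φ u)).sub hp
  have hganti : AntitoneOn g (Set.Icc u v) := by
    apply antitoneOn_of_deriv_nonpos (convex_Icc u v)
    · apply ContinuousOn.sub
      apply ContinuousOn.sub
      · exact hd1.continuousOn.mono hsub
      · exact continuousOn_const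
      · exact (ContinuousOn.mul (by fun_prop)
          (continuousOn_const.add (hd2.continuousOn.mono hsub))).div_const 2
    · rw [interior_Icc]
      intro s hs
      have hsab : s ∈ Set.Ioo a b := hsub ⟨hs.1.le, hs.2.le⟩
      exact (hdg s hsab).differentiableAt.differentiableWithinAt
    · rw [interior_Icc]
      intro s hs
      have hsab : s ∈ Set.Ioo a b := hsub ⟨hs.1.le, hs.2.le⟩
      rw [(hdg s hsab).deriv]
      -- need : deriv φ s - deriv φ u ≤ (s - u) * deriv (deriv φ) s
      have hus : u < s := hs.1
      obtain ⟨c, hc, hceq⟩ := exists_hasDerivAt_eq_slope (deriv φ) (deriv (deriv φ)) hus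
        (hd2.continuousOn.mono (fun t ht => hsub ⟨ht.1, ht.2.trans hs.2.le⟩))
        (fun t ht => hder2 t (hsub ⟨ht.1.le, ht.2.le.trans hs.2.le⟩))
      have hcab : c ∈ Set.Ioo a b := hsub ⟨hc.1.le, hc.2.le.trans hs.2.le⟩
      have hkey : deriv φ s - deriv φ u ≤ (s - u) * deriv (deriv φ) s := by
        have h1 : deriv (deriv φ) c ≤ deriv (deriv φ) s := hmono hcab hsab hc.2.le
        have h2 : deriv φ s - deriv φ u = (s - u) * deriv (deriv φ) c := by
          rw [hceq, mul_comm, div_mul_cancel₀ _ (sub_ne_zero.2 hus.ne')]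
        rw [h2]
        exact mul_le_mul_of_nonneg_left h1 (by linarith)
      linarith
  have h0 : g u = 0 := by simp [hg]
  have hgv : g v ≤ g u := hganti (Set.left_mem_Icc.2 huv.le) (Set.right_mem_Icc.2 huv.le) huv.le
  rw [h0] at hgv
  simpa [hg, sub_nonpos] using hgv

/-- Pointwise Edmundson–Lah–Ribarič type estimate for 3-convex functions
(inequality (2.11) in the paper). -/
theorem elr_pointwise_tm2 (m M : ℝ) (hmM : m < M)
    (φ : ℝ → ℝ) (a b : ℝ) (ham : a < m) (hMb : M < b)
    (hφ : ContDiffOn ℝ 3 φ (Set.Ioo a b))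
    (hφ3 : ∀ t ∈ Set.Ioo a b, 0 ≤ iteratedDeriv 3 φ t)
    (x : ℝ) (hx : x ∈ Set.Ioo m M) :
    let Δ := (φ M - φ m) / (M - m)
    (x - m) * (Δ - (deriv φ x + deriv φ m) / 2)
        ≤ (M - x) / (M - m) * φ m + (x - m) / (M - m) * φ M - φ x
      ∧ (M - x) / (M - m) * φ m + (x - m) / (M - m) * φ M - φ x
        ≤ (M - x) * ((deriv φ x + deriv φ M) / 2 - Δ) := by
  intro Δ
  have hm : m ∈ Set.Ioo a b := ⟨ham, hmM.trans hMb⟩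
  have hM : M ∈ Set.Ioo a b := ⟨ham.trans hmM, hMb⟩
  have hxab : x ∈ Set.Ioo a b := ⟨ham.trans hx.1, hx.2.trans hMb⟩
  have h1 : φ x - φ m ≤ (x - m) * (deriv φ m + deriv φ x) / 2 :=
    trapezoid_aux a b φ hφ hφ3 m x hm hxab hx.1.le
  have h2 : φ M - φ x ≤ (M - x) * (deriv φ x + deriv φ M) / 2 :=
    trapezoid_aux a b φ hφ hφ3 x M hxab hM hx.2.le
  have hMm : (0 : ℝ) < M - m := by linarith
  have hΔ : Δ = (φ M - φ m) / (M - m) := rfl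
  constructor
  · rw [hΔ]
    rw [div_mul_eq_mul_div, div_mul_eq_mul_div, ← add_div]
    rw [← sub_nonneg]
    have : (M - x) * φ m + (x - m) * φ M - (φ x + (x - m) *
        ((φ M - φ m) / (M - m) - (deriv φ x + deriv φ m) / 2)) * (M - m) ≥ 0 := by
      have e : (x - m) * ((φ M - φ m) / (M - m)) * (M - m) = (x - m) * (φ M - φ m) := by
        field_simp
      nlinarith [mul_le_mul_of_nonneg_left h1 hMm.le]
    calc (0:ℝ) ≤ ((M - x) * φ m + (x - m) * φ M - (φ x + (x - m) *
          ((φ M - φ m) / (M - m) - (deriv φ x + deriv φ m) / 2)) * (M - m)) / (M - m) :=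
        div_nonneg (by linarith) hMm.le
      _ = ((M - x) * φ m + (x - m) * φ M) / (M - m) - φ x -
          (x - m) * ((φ M - φ m) / (M - m) - (deriv φ x + deriv φ m) / 2) := by
        field_simp; ring
  · rw [hΔ]
    rw [div_mul_eq_mul_div, div_mul_eq_mul_div, ← add_div]
    rw [← sub_nonneg]
    have : (M - x) * ((deriv φ x + deriv φ M) / 2 - (φ M - φ m) / (M - m)) * (M - m) -
        ((M - x) * φ m + (x - m) * φ M - φ x * (M - m)) ≥ 0 := by
      have e : (M - x) * ((φ M - φ m) / (M - m)) * (M - m) = (M - x) * (φ M - φ m) := by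
        field_simp
      nlinarith [mul_le_mul_of_nonneg_left h2 hMm.le]
    calc (0:ℝ) ≤ ((M - x) * ((deriv φ x + deriv φ M) / 2 - (φ M - φ m) / (M - m)) * (M - m) -
          ((M - x) * φ m + (x - m) * φ M - φ x * (M - m))) / (M - m) :=
        div_nonneg (by linarith) hMm.le
      _ = (M - x) * ((deriv φ x + deriv φ M) / 2 - (φ M - φ m) / (M - m)) -
          (((M - x) * φ m + (x - m) * φ M) / (M - m) - φ x) := by
        field_simp
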